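/- Let (X,d) be a finite metric space with cardinality n = |X| ≥ 3 whose metric is not a positive multiple of the discrete metric (equivalently, 𝔇_X > 1), and let p ≥ 0. If the p-negative type gap Γ_X^p of (X,d) is positive, then, setting ζ = ln(1 + Γ_X^p/((diam X)^p · γ(n)))/ln 𝔇_X, the space (X,d) has q-negative type for all q ∈ [p, p+ζ] and strict q-negative type for all q ∈ [p, p+ζ). -/

import Mathlib

open scoped BigOperators

/-- The kernel `d(x,y)^p`, with the convention that it vanishes on the diagonal
(this matters only when `p = 0`). -/
noncomputable def negKer {X : Type*} [MetricSpace X] (p : ℝ) (x y : X) : ℝ :=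
  @ite ℝ (x = y) (Classical.dec _) 0 (dist x y ^ p)

/-- `(X,d)` has `p`-negative type: for all `k ≥ 2`, pairwise distinct points
`x₁,…,x_k` and reals `η₁,…,η_k` summing to zero,
`∑_{i,j} d(xᵢ,xⱼ)^p ηᵢ ηⱼ ≤ 0`. -/
def HasNegType (X : Type*) [MetricSpace X] (p : ℝ) : Prop :=
  ∀ (k : ℕ), 2 ≤ k → ∀ (x : Fin k → X), Function.Injective x →
    ∀ (η : Fin k → ℝ), (∑ i, η i) = 0 →
      (∑ i, ∑ j, negKer p (x i) (x j) * η i * η j) ≤ 0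

/-- `(X,d)` has strict `p`-negative type: `p`-negative type, with strict
inequality whenever `η ≠ 0`. -/
def HasStrictNegType (X : Type*) [MetricSpace X] (p : ℝ) : Prop :=
  HasNegType X p ∧
  ∀ (k : ℕ), 2 ≤ k → ∀ (x : Fin k → X), Function.Injective x →
    ∀ (η : Fin k → ℝ), (∑ i, η i) = 0 → η ≠ 0 →
      (∑ i, ∑ j, negKer p (x i) (x j) * η i * η j) < 0

/-- A normalized `(s,t)`-simplex in `X`: `s+t` pairwise distinct points
`a₁,…,a_s,b₁,…,b_t` with positive weights `m`, `n`, each family summing to `1`. -/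
structure IsNormSimplex {X : Type*} [MetricSpace X] {s t : ℕ}
    (a : Fin s → X) (b : Fin t → X) (m : Fin s → ℝ) (n : Fin t → ℝ) : Prop where
  inj_a : Function.Injective a
  inj_b : Function.Injective b
  disj : ∀ j i, a j ≠ b i
  m_pos : ∀ j, 0 < m j
  n_pos : ∀ i, 0 < n i
  m_sum : (∑ j, m j) = 1
  n_sum : (∑ i, n i) = 1

/-- The `p`-negative type simplex gap `γ_D^p(ω)` of a loaded `(s,t)`-simplex. -/
noncomputable def simplexGap {X : Type*} [MetricSpace X] (p : ℝ) {s t : ℕ}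
    (a : Fin s → X) (b : Fin t → X) (m : Fin s → ℝ) (n : Fin t → ℝ) : ℝ :=
  (∑ j, ∑ i, m j * n i * dist (a j) (b i) ^ p)
    - (∑ j₁, ∑ j₂, if j₁ < j₂ then m j₁ * m j₂ * dist (a j₁) (a j₂) ^ p else 0)
    - (∑ i₁, ∑ i₂, if i₁ < i₂ then n i₁ * n i₂ * dist (b i₁) (b i₂) ^ p else 0)

/-- `γ(m) = 1 - (1/2)(1/⌊m/2⌋ + 1/⌈m/2⌉)`. -/
noncomputable def gammaFn (m : ℕ) : ℝ :=
  1 - (1 / 2) * ((1 : ℝ) / ((m / 2 : ℕ) : ℝ) + (1 : ℝ) / (((m + 1) / 2 : ℕ) : ℝ))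

/-- The (normalized) `p`-negative type gap `Γ_X^p` of `(X,d)`: the infimum of
the simplex gaps over all normalized `(s,t)`-simplices in `X`. -/
noncomputable def negTypeGap (X : Type*) [MetricSpace X] (p : ℝ) : ℝ :=
  sInf {g : ℝ | ∃ (s t : ℕ) (a : Fin s → X) (b : Fin t → X)
    (m : Fin s → ℝ) (n : Fin t → ℝ),
      IsNormSimplex a b m n ∧ g = simplexGap p a b m n}

/-- The minimal distance between distinct points of `X`. -/
noncomputable def minSep (X : Type*) [MetricSpace X] : ℝ :=
  sInf {r : ℝ | ∃ x y : X, x ≠ y ∧ r = dist x y}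

/-- The scaled metric diameter `𝔇_X = diam X / min{d(x,y) : x ≠ y}`. -/
noncomputable def scaledDiam (X : Type*) [MetricSpace X] : ℝ :=
  Metric.diam (Set.univ : Set X) / minSep X

/-! ### Auxiliary lemmas -/

theorem nat_div_ineq' (s t n : ℕ) (hs : 1 ≤ s) (ht : 1 ≤ t) (h : s + t ≤ n) :
    n * (s * t) ≤ (s + t) * ((n/2) * ((n+1)/2)) := by
  set a := n/2 with ha
  set b := (n+1)/2 with hb
  have hab : a + b = n := by omega
  zify
  have hcase : (b:ℤ) = a ∨ (b:ℤ) = a + 1 := by omega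
  rcases eq_or_lt_of_le h with h' | h'
  · have h'' : (s:ℤ) + t = n := by exact_mod_cast congrArg (Nat.cast : ℕ → ℤ) h'
    have hst : (s:ℤ) * t ≤ a * b := by
      rcases hcase with hc | hc
      · nlinarith [sq_nonneg ((s:ℤ)-t), hab, h'']
      · have hne : (s:ℤ) - t ≤ -1 ∨ 1 ≤ (s:ℤ) - t := by omega
        rcases hne with h1 | h1 <;> nlinarith [hab, h'']
    have hn : (0:ℤ) ≤ n := by positivity
    calc (n:ℤ) * ((s:ℤ)*t) ≤ n * (a*b) := mul_le_mul_of_nonneg_left hst hn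
      _ = ((s:ℤ)+t) * (a*b) := by rw [h'']
  · have h4 : (n:ℤ) * n - 1 ≤ 4 * (a * b) := by
      rcases hcase with hc | hc <;> nlinarith [hab]
    have h2 : 4*((s:ℤ)*t) ≤ ((s:ℤ)+t)^2 := by nlinarith [sq_nonneg ((s:ℤ)-t)]
    have hS : ((s:ℤ)+t) + 1 ≤ n := by exact_mod_cast h'
    have hSpos : (0:ℤ) < (s:ℤ)+t := by positivity
    have hnpos : (0:ℤ) < n := by omega
    have h5 : (n:ℤ)*((s:ℤ)+t) ≤ n*n - 1 := by nlinarith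
    have h6 : (n:ℤ)*((s:ℤ)+t)*((s:ℤ)+t) ≤ (4*(a*b))*((s:ℤ)+t) :=
      mul_le_mul_of_nonneg_right (le_trans h5 h4) hSpos.le
    have h7 : (n:ℤ)*(4*((s:ℤ)*t)) ≤ n*(((s:ℤ)+t)^2) := mul_le_mul_of_nonneg_left h2 hnpos.le
    nlinarith [h6, h7]

lemma inv_floor_bound' (s t n : ℕ) (hs : 1 ≤ s) (ht : 1 ≤ t) (h : s + t ≤ n) :
    (1:ℝ)/((n/2 : ℕ):ℝ) + 1/(((n+1)/2 : ℕ):ℝ) ≤ 1/(s:ℝ) + 1/(t:ℝ) := by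
  have hA : 1 ≤ n/2 := by omega
  have hB : 1 ≤ (n+1)/2 := by omega
  have hAr : (0:ℝ) < ((n/2 : ℕ):ℝ) := by exact_mod_cast hA
  have hBr : (0:ℝ) < (((n+1)/2 : ℕ):ℝ) := by exact_mod_cast hB
  have hsr : (0:ℝ) < (s:ℝ) := by exact_mod_cast hs
  have htr : (0:ℝ) < (t:ℝ) := by exact_mod_cast ht
  have key : ((n:ℝ)) * ((s:ℝ)*(t:ℝ)) ≤ ((s:ℝ)+(t:ℝ)) * (((n/2:ℕ):ℝ) * (((n+1)/2:ℕ):ℝ)) := by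
    exact_mod_cast nat_div_ineq' s t n hs ht h
  have hABn : ((n/2:ℕ):ℝ) + (((n+1)/2:ℕ):ℝ) = (n:ℝ) := by
    exact_mod_cast (by omega : n/2 + (n+1)/2 = n)
  rw [div_add_div _ _ hAr.ne' hBr.ne', div_add_div _ _ hsr.ne' htr.ne',
    div_le_div_iff₀ (by positivity) (by positivity)]
  have hsub : (((n/2:ℕ):ℝ) + (((n+1)/2:ℕ):ℝ)) * ((s:ℝ)*(t:ℝ)) = (n:ℝ) * ((s:ℝ)*(t:ℝ)) := by
    rw [hABn]
  nlinarith [key, hsub]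

lemma gammaFn_bounds' {n : ℕ} (h : 3 ≤ n) : (1/4 : ℝ) ≤ gammaFn n ∧ gammaFn n ≤ 1 := by
  have hA : 1 ≤ n/2 := by omega
  have hB : 2 ≤ (n+1)/2 := by omega
  have hAr : (1:ℝ) ≤ ((n/2 : ℕ):ℝ) := by exact_mod_cast hA
  have hBr : (2:ℝ) ≤ (((n+1)/2 : ℕ):ℝ) := by exact_mod_cast hB
  have h1 : (1:ℝ)/((n/2 : ℕ):ℝ) ≤ 1 := by
    rw [div_le_one (by linarith)]; linarith
  have h2 : (1:ℝ)/(((n+1)/2 : ℕ):ℝ) ≤ 1/2 := by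
    rw [div_le_div_iff₀ (by linarith) (by norm_num)]; linarith
  have h3 : (0:ℝ) ≤ (1:ℝ)/((n/2 : ℕ):ℝ) := by positivity
  have h4 : (0:ℝ) ≤ (1:ℝ)/(((n+1)/2 : ℕ):ℝ) := by positivity
  unfold gammaFn
  constructor <;> nlinarith

lemma negKer_symm' {X : Type*} [MetricSpace X] (q : ℝ) (x y : X) :
    negKer q x y = negKer q y x := by
  unfold negKer
  rcases eq_or_ne x y with h | h
  · subst h; rfl
  · rw [if_neg h, if_neg (Ne.symm h), dist_comm]

lemma negKer_apply' {X : Type*} [MetricSpace X] (q : ℝ) {x y : X} (h : x ≠ y) :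
    negKer q x y = dist x y ^ q := if_neg h

lemma sum_split' {ι : Type*} [LinearOrder ι] (S : Finset ι) (G : ι → ι → ℝ)
    (hsym : ∀ u v, G u v = G v u) :
    ∑ u ∈ S, ∑ v ∈ S, G u v
      = 2 * (∑ u ∈ S, ∑ v ∈ S, if u < v then G u v else 0) + ∑ u ∈ S, G u u := by
  have key : ∀ u ∈ S, ∀ v ∈ S, G u v =
      (if u < v then G u v else 0) + (if v < u then G u v else 0)
        + (if u = v then G u v else 0) := by
    intro u _ v _
    rcases lt_trichotomy u v with h | h | h
    · rw [if_pos h, if_neg (asymm h), if_neg (ne_of_lt h)]; ring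
    · subst h; rw [if_neg (lt_irrefl u), if_pos rfl]; ring
    · rw [if_neg (asymm h), if_pos h, if_neg h.ne']; ring
  rw [Finset.sum_congr rfl (fun u hu => Finset.sum_congr rfl (fun v hv => key u hu v hv))]
  have h1 : ∀ u ∈ S, (∑ v ∈ S, ((if u < v then G u v else 0) + (if v < u then G u v else 0)
        + (if u = v then G u v else 0)))
      = (∑ v ∈ S, if u < v then G u v else 0) + (∑ v ∈ S, if v < u then G u v else 0)
        + (∑ v ∈ S, if u = v then G u v else 0) := by
    intro u _; rw [Finset.sum_add_distrib, Finset.sum_add_distrib]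
  rw [Finset.sum_congr rfl h1, Finset.sum_add_distrib, Finset.sum_add_distrib]
  have h2 : ∑ u ∈ S, ∑ v ∈ S, (if v < u then G u v else 0)
      = ∑ u ∈ S, ∑ v ∈ S, (if u < v then G u v else 0) := by
    rw [Finset.sum_comm]
    exact Finset.sum_congr rfl fun u _ => Finset.sum_congr rfl fun v _ => by rw [hsym]
  have h3 : ∑ u ∈ S, ∑ v ∈ S, (if u = v then G u v else 0) = ∑ u ∈ S, G u u := by
    refine Finset.sum_congr rfl fun u hu => ?_
    rw [Finset.sum_ite_eq S u (fun v => G u v), if_pos hu]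
  rw [h2, h3]; ring

lemma sum_orderIso' {k : ℕ} (S : Finset (Fin k)) (f : Fin k → ℝ) :
    ∑ j : Fin S.card, f (S.orderIsoOfFin rfl j) = ∑ i ∈ S, f i := by
  rw [← Finset.sum_coe_sort S f]
  exact Equiv.sum_comp (S.orderIsoOfFin rfl).toEquiv (fun i => f i)

lemma sum_orderIso2' {k : ℕ} (S T : Finset (Fin k)) (f : Fin k → Fin k → ℝ) :
    ∑ j : Fin S.card, ∑ i : Fin T.card,
        f (S.orderIsoOfFin rfl j) (T.orderIsoOfFin rfl i)
      = ∑ u ∈ S, ∑ v ∈ T, f u v := by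
  rw [← sum_orderIso' S (fun u => ∑ v ∈ T, f u v)]
  exact Finset.sum_congr rfl fun j _ => sum_orderIso' T _

lemma orderIso_lt_iff' {k : ℕ} (S : Finset (Fin k)) (j1 j2 : Fin S.card) :
    j1 < j2 ↔ (S.orderIsoOfFin rfl j1 : Fin k) < (S.orderIsoOfFin rfl j2 : Fin k) := by
  constructor
  · intro h; exact Subtype.coe_lt_coe.mpr ((S.orderIsoOfFin rfl).lt_iff_lt.mpr h)
  · intro h; exact (S.orderIsoOfFin rfl).lt_iff_lt.mp (Subtype.coe_lt_coe.mp h)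

lemma quad_eq_gap' {X : Type*} [MetricSpace X] {k : ℕ} (x : Fin k → X)
    (hx : Function.Injective x) (η : Fin k → ℝ) (hsum : (∑ i, η i) = 0) (hne : η ≠ 0) :
    ∃ (s t : ℕ) (a : Fin s → X) (b : Fin t → X) (m : Fin s → ℝ) (n : Fin t → ℝ) (α : ℝ),
      IsNormSimplex a b m n ∧ 0 < α ∧
      ∀ q : ℝ, (∑ i, ∑ j, negKer q (x i) (x j) * η i * η j)
        = -(2 * α ^ 2) * simplexGap q a b m n := by
  classical
  set P : Finset (Fin k) := Finset.univ.filter (fun i => 0 < η i) with hP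
  set N : Finset (Fin k) := Finset.univ.filter (fun i => η i < 0) with hN
  have hmemP : ∀ i, i ∈ P ↔ 0 < η i := by intro i; simp [hP]
  have hmemN : ∀ i, i ∈ N ↔ η i < 0 := by intro i; simp [hN]
  have hdisj : Disjoint P N := by
    rw [Finset.disjoint_left]; intro i hiP hiN
    exact absurd ((hmemN i).mp hiN) (not_lt.mpr ((hmemP i).mp hiP).le)
  have hzero : ∀ i, i ∉ P ∪ N → η i = 0 := by
    intro i hi
    rw [Finset.mem_union] at hi; push_neg at hi
    by_contra h
    rcases lt_or_gt_of_ne h with h' | h'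
    · exact hi.2 ((hmemN i).mpr h')
    · exact hi.1 ((hmemP i).mpr h')
  have hsumPN : ∑ i ∈ P, η i + ∑ i ∈ N, η i = 0 := by
    rw [← Finset.sum_union hdisj,
      Finset.sum_subset (Finset.subset_univ (P ∪ N)) (fun i _ hi => hzero i hi)]
    exact hsum
  set α : ℝ := ∑ i ∈ P, η i with hα
  have hαpos : 0 < α := by
    obtain ⟨i0, hi0⟩ := Function.ne_iff.mp hne
    rcases lt_or_gt_of_ne hi0 with h' | h'
    · have hNsum : 0 < ∑ i ∈ N, (-η i) :=
        Finset.sum_pos (fun i hi => neg_pos.mpr ((hmemN i).mp hi))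
          ⟨i0, (hmemN i0).mpr h'⟩
      rw [Finset.sum_neg_distrib] at hNsum
      linarith
    · exact Finset.sum_pos (fun i hi => (hmemP i).mp hi) ⟨i0, (hmemP i0).mpr h'⟩
  have hNsum : ∑ i ∈ N, η i = -α := by linarith
  set s := P.card with hs
  set t := N.card with ht
  set eP := P.orderIsoOfFin rfl with heP
  set eN := N.orderIsoOfFin rfl with heN
  set a : Fin s → X := fun j => x (eP j) with ha
  set b : Fin t → X := fun i => x (eN i) with hb
  set m : Fin s → ℝ := fun j => η (eP j) / α with hm
  set n : Fin t → ℝ := fun i => -η (eN i) / α with hn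
  have hxy : ∀ {u v : Fin k}, u ≠ v → x u ≠ x v := fun h hh => h (hx hh)
  have hsimplex : IsNormSimplex a b m n := by
    constructor
    · intro j1 j2 h
      exact eP.injective (Subtype.ext (hx h))
    · intro i1 i2 h
      exact eN.injective (Subtype.ext (hx h))
    · intro j i h
      have h1 := (hmemP _).mp (eP j).2
      have h2 := (hmemN _).mp (eN i).2
      rw [(hx h : ((eP j : Fin k)) = (eN i : Fin k))] at h1
      linarith
    · intro j; exact div_pos ((hmemP _).mp (eP j).2) hαpos
    · intro i; exact div_pos (neg_pos.mpr ((hmemN _).mp (eN i).2)) hαpos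
    · rw [hm, ← Finset.sum_div, sum_orderIso' P (fun u => η u), ← hα, div_self hαpos.ne']
    · rw [hn, ← Finset.sum_div, sum_orderIso' N (fun u => -η u), Finset.sum_neg_distrib,
        hNsum, neg_neg, div_self hαpos.ne']
  refine ⟨s, t, a, b, m, n, α, hsimplex, hαpos, fun q => ?_⟩
  set F : Fin k → Fin k → ℝ := fun u v => negKer q (x u) (x v) * η u * η v with hF
  have hFsym : ∀ u v, F u v = F v u := by
    intro u v; simp only [hF]; rw [negKer_symm']; ring
  have hFdiag : ∀ u, F u u = 0 := by intro u; simp [hF, negKer]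
  have inner : ∀ i, (∑ j, F i j) = ∑ j ∈ P ∪ N, F i j := fun i =>
    (Finset.sum_subset (Finset.subset_univ _) (fun j _ hj => by
      simp [hF, hzero j hj])).symm
  have outer : (∑ i, ∑ j ∈ P ∪ N, F i j) = ∑ i ∈ P ∪ N, ∑ j ∈ P ∪ N, F i j :=
    (Finset.sum_subset (Finset.subset_univ _) (fun i _ hi =>
      Finset.sum_eq_zero fun j _ => by simp [hF, hzero i hi])).symm
  have step1 : (∑ i, ∑ j, F i j) = ∑ i ∈ P ∪ N, ∑ j ∈ P ∪ N, F i j := by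
    calc (∑ i, ∑ j, F i j) = ∑ i, ∑ j ∈ P ∪ N, F i j :=
          Finset.sum_congr rfl fun i _ => inner i
      _ = _ := outer
  have e1 : ∀ (S : Finset (Fin k)), ∑ u ∈ S, ∑ v ∈ P ∪ N, F u v
      = (∑ u ∈ S, ∑ v ∈ P, F u v) + ∑ u ∈ S, ∑ v ∈ N, F u v := by
    intro S
    rw [← Finset.sum_add_distrib]
    exact Finset.sum_congr rfl fun u _ => Finset.sum_union hdisj
  have step2 : ∑ i ∈ P ∪ N, ∑ j ∈ P ∪ N, F i j
      = ((∑ u ∈ P, ∑ v ∈ P, F u v) + ∑ u ∈ P, ∑ v ∈ N, F u v)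
        + ((∑ u ∈ N, ∑ v ∈ P, F u v) + ∑ u ∈ N, ∑ v ∈ N, F u v) := by
    rw [Finset.sum_union hdisj, e1 P, e1 N]
  have hsymPN : ∑ u ∈ N, ∑ v ∈ P, F u v = ∑ u ∈ P, ∑ v ∈ N, F u v := by
    rw [Finset.sum_comm]
    exact Finset.sum_congr rfl fun u _ => Finset.sum_congr rfl fun v _ => hFsym _ _
  have hPP := sum_split' P F hFsym
  have hNN := sum_split' N F hFsym
  have hDP : ∑ u ∈ P, F u u = 0 := Finset.sum_eq_zero fun u _ => hFdiag u
  have hDN : ∑ u ∈ N, F u u = 0 := Finset.sum_eq_zero fun u _ => hFdiag u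
  have EA : α^2 * (∑ j₁, ∑ j₂, if j₁ < j₂ then m j₁ * m j₂ * dist (a j₁) (a j₂) ^ q else 0)
      = ∑ u ∈ P, ∑ v ∈ P, (if u < v then F u v else 0) := by
    rw [← sum_orderIso2' P P (fun u v => if u < v then F u v else 0), Finset.mul_sum]
    refine Finset.sum_congr rfl fun j₁ _ => ?_
    rw [Finset.mul_sum]
    refine Finset.sum_congr rfl fun j₂ _ => ?_
    by_cases h : ((eP j₁ : Fin k)) < (eP j₂ : Fin k)
    · rw [if_pos ((orderIso_lt_iff' P j₁ j₂).mpr h), if_pos h]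
      rw [hF]
      show α^2 * (m j₁ * m j₂ * dist (a j₁) (a j₂) ^ q)
        = negKer q (x (eP j₁)) (x (eP j₂)) * η (eP j₁) * η (eP j₂)
      rw [negKer_apply' q (hxy (ne_of_lt h)), hm, ha]
      field_simp
    · rw [if_neg (fun hh => h ((orderIso_lt_iff' P j₁ j₂).mp hh)), if_neg h, mul_zero]
  have EB : α^2 * (∑ i₁, ∑ i₂, if i₁ < i₂ then n i₁ * n i₂ * dist (b i₁) (b i₂) ^ q else 0)
      = ∑ u ∈ N, ∑ v ∈ N, (if u < v then F u v else 0) := by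
    rw [← sum_orderIso2' N N (fun u v => if u < v then F u v else 0), Finset.mul_sum]
    refine Finset.sum_congr rfl fun i₁ _ => ?_
    rw [Finset.mul_sum]
    refine Finset.sum_congr rfl fun i₂ _ => ?_
    by_cases h : ((eN i₁ : Fin k)) < (eN i₂ : Fin k)
    · rw [if_pos ((orderIso_lt_iff' N i₁ i₂).mpr h), if_pos h]
      rw [hF]
      show α^2 * (n i₁ * n i₂ * dist (b i₁) (b i₂) ^ q)
        = negKer q (x (eN i₁)) (x (eN i₂)) * η (eN i₁) * η (eN i₂)
      rw [negKer_apply' q (hxy (ne_of_lt h)), hn, hb]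
      field_simp
    · rw [if_neg (fun hh => h ((orderIso_lt_iff' N i₁ i₂).mp hh)), if_neg h, mul_zero]
  have EC : α^2 * (∑ j, ∑ i, m j * n i * dist (a j) (b i) ^ q)
      = -(∑ u ∈ P, ∑ v ∈ N, F u v) := by
    have hneg : -(∑ u ∈ P, ∑ v ∈ N, F u v) = ∑ u ∈ P, ∑ v ∈ N, -F u v := by
      simp [Finset.sum_neg_distrib]
    rw [hneg, ← sum_orderIso2' P N (fun u v => -F u v), Finset.mul_sum]
    refine Finset.sum_congr rfl fun j _ => ?_
    rw [Finset.mul_sum]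
    refine Finset.sum_congr rfl fun i _ => ?_
    have huv : ((eP j : Fin k)) ≠ (eN i : Fin k) := by
      intro h
      exact (Finset.disjoint_left.mp hdisj (eP j).2) (h ▸ (eN i).2)
    rw [hF]
    show α^2 * (m j * n i * dist (a j) (b i) ^ q)
      = -(negKer q (x (eP j)) (x (eN i)) * η (eP j) * η (eN i))
    rw [negKer_apply' q (hxy huv), hm, hn, ha, hb]
    field_simp
  show (∑ i, ∑ j, F i j) = -(2 * α ^ 2) * simplexGap q a b m n
  rw [step1, step2]
  unfold simplexGap
  linear_combination hPP + hNN + hDP + hDN + hsymPN - 2*EA - 2*EB + 2*EC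

section SpaceAux
variable {X : Type*} [MetricSpace X] [Fintype X]

lemma minSep_set_finite' : {r : ℝ | ∃ x y : X, x ≠ y ∧ r = dist x y}.Finite := by
  apply Set.Finite.subset (Set.finite_range (fun p : X × X => dist p.1 p.2))
  rintro r ⟨x, y, -, rfl⟩
  exact ⟨(x, y), rfl⟩

lemma minSep_pos' (h : ∃ x y : X, x ≠ y) : 0 < minSep X := by
  obtain ⟨x, y, hxy⟩ := h
  obtain ⟨x', y', hxy', hr⟩ :=
    Set.Nonempty.csInf_mem (⟨_, ⟨x, y, hxy, rfl⟩⟩ :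
      Set.Nonempty {r : ℝ | ∃ x y : X, x ≠ y ∧ r = dist x y}) minSep_set_finite'
  rw [minSep, hr]
  exact dist_pos.mpr hxy'

lemma minSep_le_dist' {x y : X} (h : x ≠ y) : minSep X ≤ dist x y :=
  csInf_le minSep_set_finite'.bddBelow ⟨x, y, h, rfl⟩

lemma dist_le_diam' (x y : X) : dist x y ≤ Metric.diam (Set.univ : Set X) :=
  Metric.dist_le_diam_of_mem (Set.finite_univ.isBounded) (Set.mem_univ x) (Set.mem_univ y)

variable {s t : ℕ} {a : Fin s → X} {b : Fin t → X} {m : Fin s → ℝ} {n : Fin t → ℝ}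

lemma weights_le' (hS : IsNormSimplex a b m n) :
    (∑ j₁, ∑ j₂, if j₁ < j₂ then m j₁ * m j₂ else 0)
      + (∑ i₁, ∑ i₂, if i₁ < i₂ then n i₁ * n i₂ else 0)
      ≤ gammaFn (Fintype.card X) := by
  have hs1 : 1 ≤ s := by
    rcases Nat.eq_zero_or_pos s with h | h
    · exfalso; have := hS.m_sum; subst h; simp at this
    · exact h
  have ht1 : 1 ≤ t := by
    rcases Nat.eq_zero_or_pos t with h | h
    · exfalso; have := hS.n_sum; subst h; simp at this
    · exact h
  have hinj : Function.Injective (Sum.elim a b) := by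
    rintro (j1|i1) (j2|i2) h <;> simp only [Sum.elim_inl, Sum.elim_inr] at h
    · rw [hS.inj_a h]
    · exact absurd h (hS.disj _ _)
    · exact absurd h.symm (hS.disj _ _)
    · rw [hS.inj_b h]
  have hst : s + t ≤ Fintype.card X := by
    have := Fintype.card_le_of_injective _ hinj
    simpa [Fintype.card_sum] using this
  have hsp : (0:ℝ) < s := by exact_mod_cast hs1
  have htp : (0:ℝ) < t := by exact_mod_cast ht1
  have hm2 : (1:ℝ)/(s:ℝ) ≤ ∑ j, (m j)^2 := by
    have h1 := sq_sum_le_card_mul_sum_sq (s := (Finset.univ : Finset (Fin s))) (f := m)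
    rw [hS.m_sum] at h1
    simp only [Finset.card_univ, Fintype.card_fin] at h1
    rw [div_le_iff₀ hsp]
    nlinarith [h1]
  have hn2 : (1:ℝ)/(t:ℝ) ≤ ∑ i, (n i)^2 := by
    have h1 := sq_sum_le_card_mul_sum_sq (s := (Finset.univ : Finset (Fin t))) (f := n)
    rw [hS.n_sum] at h1
    simp only [Finset.card_univ, Fintype.card_fin] at h1
    rw [div_le_iff₀ htp]
    nlinarith [h1]
  have hWa : (∑ j₁, ∑ j₂, if j₁ < j₂ then m j₁ * m j₂ else 0)
      = (1 - ∑ j, (m j)^2) / 2 := by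
    have h1 := sum_split' (Finset.univ : Finset (Fin s)) (fun u v => m u * m v)
      (fun u v => mul_comm _ _)
    have h2 : ∑ u : Fin s, ∑ v : Fin s, m u * m v = 1 := by
      rw [← Finset.sum_mul_sum Finset.univ Finset.univ m m, hS.m_sum]; norm_num
    have h3 : ∑ u : Fin s, m u * m u = ∑ j, (m j)^2 := by
      exact Finset.sum_congr rfl fun u _ => (sq (m u)).symm
    rw [h2, h3] at h1
    linarith
  have hWb : (∑ i₁, ∑ i₂, if i₁ < i₂ then n i₁ * n i₂ else 0)
      = (1 - ∑ i, (n i)^2) / 2 := by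
    have h1 := sum_split' (Finset.univ : Finset (Fin t)) (fun u v => n u * n v)
      (fun u v => mul_comm _ _)
    have h2 : ∑ u : Fin t, ∑ v : Fin t, n u * n v = 1 := by
      rw [← Finset.sum_mul_sum Finset.univ Finset.univ n n, hS.n_sum]; norm_num
    have h3 : ∑ u : Fin t, n u * n u = ∑ i, (n i)^2 := by
      exact Finset.sum_congr rfl fun u _ => (sq (n u)).symm
    rw [h2, h3] at h1
    linarith
  have hib := inv_floor_bound' s t (Fintype.card X) hs1 ht1 hst
  rw [hWa, hWb]
  unfold gammaFn
  linarith

end SpaceAux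

lemma rpow_low' {d δ p ε : ℝ} (hδ : 0 < δ) (hd : δ ≤ d) (hε : 0 ≤ ε) :
    δ ^ ε * d ^ p ≤ d ^ (p + ε) := by
  rw [Real.rpow_add (lt_of_lt_of_le hδ hd), mul_comm]
  exact mul_le_mul_of_nonneg_left (Real.rpow_le_rpow hδ.le hd hε)
    (Real.rpow_nonneg (by linarith) p)

lemma rpow_high' {d Δ p ε : ℝ} (hd : 0 < d) (hdΔ : d ≤ Δ) (hε : 0 ≤ ε) :
    d ^ (p + ε) ≤ Δ ^ ε * d ^ p := by
  rw [Real.rpow_add hd, mul_comm (Δ ^ ε)]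
  exact mul_le_mul_of_nonneg_left (Real.rpow_le_rpow hd.le hdΔ hε)
    (Real.rpow_nonneg hd.le p)

section SpaceAux2
variable {X : Type*} [MetricSpace X] [Fintype X]
variable {s t : ℕ} {a : Fin s → X} {b : Fin t → X} {m : Fin s → ℝ} {n : Fin t → ℝ}

lemma cross_nonneg' (hS : IsNormSimplex a b m n) (q : ℝ) :
    0 ≤ ∑ j, ∑ i, m j * n i * dist (a j) (b i) ^ q :=
  Finset.sum_nonneg fun j _ => Finset.sum_nonneg fun i _ => by
    have := hS.m_pos j; have := hS.n_pos i
    have := Real.rpow_nonneg (dist_nonneg (x := a j) (y := b i)) q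
    positivity

lemma within_a_nonneg' (hS : IsNormSimplex a b m n) (q : ℝ) :
    0 ≤ ∑ j₁, ∑ j₂, if j₁ < j₂ then m j₁ * m j₂ * dist (a j₁) (a j₂) ^ q else 0 :=
  Finset.sum_nonneg fun j₁ _ => Finset.sum_nonneg fun j₂ _ => by
    split
    · have := hS.m_pos j₁; have := hS.m_pos j₂
      have := Real.rpow_nonneg (dist_nonneg (x := a j₁) (y := a j₂)) q
      positivity
    · exact le_refl 0

lemma within_b_nonneg' (hS : IsNormSimplex a b m n) (q : ℝ) :
    0 ≤ ∑ i₁, ∑ i₂, if i₁ < i₂ then n i₁ * n i₂ * dist (b i₁) (b i₂) ^ q else 0 :=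
  Finset.sum_nonneg fun i₁ _ => Finset.sum_nonneg fun i₂ _ => by
    split
    · have := hS.n_pos i₁; have := hS.n_pos i₂
      have := Real.rpow_nonneg (dist_nonneg (x := b i₁) (y := b i₂)) q
      positivity
    · exact le_refl 0

lemma within_le' {p : ℝ} (hp : 0 ≤ p) (hS : IsNormSimplex a b m n) :
    (∑ j₁, ∑ j₂, if j₁ < j₂ then m j₁ * m j₂ * dist (a j₁) (a j₂) ^ p else 0)
      + (∑ i₁, ∑ i₂, if i₁ < i₂ then n i₁ * n i₂ * dist (b i₁) (b i₂) ^ p else 0)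
      ≤ Metric.diam (Set.univ : Set X) ^ p * gammaFn (Fintype.card X) := by
  set Δ := Metric.diam (Set.univ : Set X) with hΔ
  have hΔp : (0:ℝ) ≤ Δ ^ p := Real.rpow_nonneg Metric.diam_nonneg p
  have h1 : (∑ j₁, ∑ j₂, if j₁ < j₂ then m j₁ * m j₂ * dist (a j₁) (a j₂) ^ p else 0)
      ≤ Δ ^ p * (∑ j₁, ∑ j₂, if j₁ < j₂ then m j₁ * m j₂ else 0) := by
    rw [Finset.mul_sum]
    refine Finset.sum_le_sum fun j₁ _ => ?_
    rw [Finset.mul_sum]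
    refine Finset.sum_le_sum fun j₂ _ => ?_
    rw [mul_ite, mul_zero]
    split
    · have hd : dist (a j₁) (a j₂) ^ p ≤ Δ ^ p :=
        Real.rpow_le_rpow dist_nonneg (dist_le_diam' _ _) hp
      have hm : (0:ℝ) ≤ m j₁ * m j₂ := (mul_pos (hS.m_pos j₁) (hS.m_pos j₂)).le
      calc m j₁ * m j₂ * dist (a j₁) (a j₂) ^ p ≤ m j₁ * m j₂ * Δ ^ p :=
            mul_le_mul_of_nonneg_left hd hm
        _ = Δ ^ p * (m j₁ * m j₂) := by ring
    · exact le_refl 0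
  have h2 : (∑ i₁, ∑ i₂, if i₁ < i₂ then n i₁ * n i₂ * dist (b i₁) (b i₂) ^ p else 0)
      ≤ Δ ^ p * (∑ i₁, ∑ i₂, if i₁ < i₂ then n i₁ * n i₂ else 0) := by
    rw [Finset.mul_sum]
    refine Finset.sum_le_sum fun i₁ _ => ?_
    rw [Finset.mul_sum]
    refine Finset.sum_le_sum fun i₂ _ => ?_
    rw [mul_ite, mul_zero]
    split
    · have hd : dist (b i₁) (b i₂) ^ p ≤ Δ ^ p :=
        Real.rpow_le_rpow dist_nonneg (dist_le_diam' _ _) hp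
      have hn : (0:ℝ) ≤ n i₁ * n i₂ := (mul_pos (hS.n_pos i₁) (hS.n_pos i₂)).le
      calc n i₁ * n i₂ * dist (b i₁) (b i₂) ^ p ≤ n i₁ * n i₂ * Δ ^ p :=
            mul_le_mul_of_nonneg_left hd hn
        _ = Δ ^ p * (n i₁ * n i₂) := by ring
    · exact le_refl 0
  have h3 := weights_le' hS
  nlinarith [h1, h2, h3, hΔp]

lemma negTypeGap_le_gap' {p : ℝ} (hp : 0 ≤ p) (hS : IsNormSimplex a b m n) :
    negTypeGap X p ≤ simplexGap p a b m n := by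
  apply csInf_le
  · refine ⟨-(Metric.diam (Set.univ : Set X) ^ p * gammaFn (Fintype.card X)), ?_⟩
    rintro g ⟨s', t', a', b', m', n', hS', rfl⟩
    have hw := within_le' hp hS'
    have hcr := cross_nonneg' hS' p
    unfold simplexGap
    linarith
  · exact ⟨s, t, a, b, m, n, hS, rfl⟩

lemma gap_lower_main' (hcard : 3 ≤ Fintype.card X) {p ε : ℝ} (hp : 0 ≤ p) (hε : 0 ≤ ε)
    (hS : IsNormSimplex a b m n) :
    minSep X ^ ε * negTypeGap X p
      - (Metric.diam (Set.univ : Set X) ^ ε - minSep X ^ ε)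
        * (Metric.diam (Set.univ : Set X) ^ p * gammaFn (Fintype.card X))
      ≤ simplexGap (p + ε) a b m n := by
  set δ := minSep X with hδdef
  set Δ := Metric.diam (Set.univ : Set X) with hΔdef
  have hpair : ∃ x y : X, x ≠ y := by
    obtain ⟨x, y, h⟩ := Fintype.exists_pair_of_one_lt_card (α := X) (by omega)
    exact ⟨x, y, h⟩
  have hδ : 0 < δ := minSep_pos' hpair
  have hδΔ : δ ≤ Δ := by
    obtain ⟨x, y, h⟩ := hpair
    exact le_trans (minSep_le_dist' h) (dist_le_diam' x y)
  have h1 : δ ^ ε * (∑ j, ∑ i, m j * n i * dist (a j) (b i) ^ p)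
      ≤ ∑ j, ∑ i, m j * n i * dist (a j) (b i) ^ (p + ε) := by
    rw [Finset.mul_sum]
    refine Finset.sum_le_sum fun j _ => ?_
    rw [Finset.mul_sum]
    refine Finset.sum_le_sum fun i _ => ?_
    have hkey := rpow_low' (p := p) (d := dist (a j) (b i)) hδ
      (minSep_le_dist' (hS.disj j i)) hε
    have hmn : (0:ℝ) ≤ m j * n i := (mul_pos (hS.m_pos j) (hS.n_pos i)).le
    calc δ ^ ε * (m j * n i * dist (a j) (b i) ^ p)
        = (m j * n i) * (δ ^ ε * dist (a j) (b i) ^ p) := by ring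
      _ ≤ (m j * n i) * dist (a j) (b i) ^ (p + ε) := mul_le_mul_of_nonneg_left hkey hmn
  have h2 : (∑ j₁, ∑ j₂, if j₁ < j₂ then m j₁ * m j₂ * dist (a j₁) (a j₂) ^ (p+ε) else 0)
      ≤ Δ ^ ε * (∑ j₁, ∑ j₂, if j₁ < j₂ then m j₁ * m j₂ * dist (a j₁) (a j₂) ^ p else 0) := by
    rw [Finset.mul_sum]
    refine Finset.sum_le_sum fun j₁ _ => ?_
    rw [Finset.mul_sum]
    refine Finset.sum_le_sum fun j₂ _ => ?_
    rw [mul_ite, mul_zero]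
    split
    · next h =>
      have hdpos : 0 < dist (a j₁) (a j₂) :=
        dist_pos.mpr (fun hh => (ne_of_lt h) (hS.inj_a hh))
      have hkey := rpow_high' (p := p) hdpos (dist_le_diam' (a j₁) (a j₂)) hε
      have hm : (0:ℝ) ≤ m j₁ * m j₂ := (mul_pos (hS.m_pos j₁) (hS.m_pos j₂)).le
      calc m j₁ * m j₂ * dist (a j₁) (a j₂) ^ (p+ε)
          = (m j₁ * m j₂) * dist (a j₁) (a j₂) ^ (p+ε) := by ring
        _ ≤ (m j₁ * m j₂) * (Δ ^ ε * dist (a j₁) (a j₂) ^ p) :=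
            mul_le_mul_of_nonneg_left hkey hm
        _ = Δ ^ ε * (m j₁ * m j₂ * dist (a j₁) (a j₂) ^ p) := by ring
    · exact le_refl 0
  have h3 : (∑ i₁, ∑ i₂, if i₁ < i₂ then n i₁ * n i₂ * dist (b i₁) (b i₂) ^ (p+ε) else 0)
      ≤ Δ ^ ε * (∑ i₁, ∑ i₂, if i₁ < i₂ then n i₁ * n i₂ * dist (b i₁) (b i₂) ^ p else 0) := by
    rw [Finset.mul_sum]
    refine Finset.sum_le_sum fun i₁ _ => ?_
    rw [Finset.mul_sum]
    refine Finset.sum_le_sum fun i₂ _ => ?_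
    rw [mul_ite, mul_zero]
    split
    · next h =>
      have hdpos : 0 < dist (b i₁) (b i₂) :=
        dist_pos.mpr (fun hh => (ne_of_lt h) (hS.inj_b hh))
      have hkey := rpow_high' (p := p) hdpos (dist_le_diam' (b i₁) (b i₂)) hε
      have hn : (0:ℝ) ≤ n i₁ * n i₂ := (mul_pos (hS.n_pos i₁) (hS.n_pos i₂)).le
      calc n i₁ * n i₂ * dist (b i₁) (b i₂) ^ (p+ε)
          = (n i₁ * n i₂) * dist (b i₁) (b i₂) ^ (p+ε) := by ring
        _ ≤ (n i₁ * n i₂) * (Δ ^ ε * dist (b i₁) (b i₂) ^ p) :=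
            mul_le_mul_of_nonneg_left hkey hn
        _ = Δ ^ ε * (n i₁ * n i₂ * dist (b i₁) (b i₂) ^ p) := by ring
    · exact le_refl 0
  have h4 := within_a_nonneg' hS p
  have h4' := within_b_nonneg' hS p
  have h5 := within_le' hp hS
  have h6 := negTypeGap_le_gap' hp hS
  have hδε : (0:ℝ) ≤ δ ^ ε := Real.rpow_nonneg hδ.le ε
  have hΔε : δ ^ ε ≤ Δ ^ ε := Real.rpow_le_rpow hδ.le hδΔ hε
  unfold simplexGap at h6 ⊢
  have t1 := mul_le_mul_of_nonneg_left h6 hδε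
  have t2 := mul_le_mul_of_nonneg_left h5 (by linarith : (0:ℝ) ≤ Δ ^ ε - δ ^ ε)
  nlinarith [t1, t2, h1, h2, h3]

end SpaceAux2


/-- Quantitative lower bound on supremal strict negative type: if `|X| = n ≥ 3`,
the metric is not a multiple of the discrete metric (`𝔇_X > 1`) and `Γ_X^p > 0`,
then with `ζ = ln(1 + Γ_X^p/((diam X)^p γ(n)))/ln 𝔇_X`, the space has
`q`-negative type for all `q ∈ [p, p+ζ]` and strict `q`-negative type for all
`q ∈ [p, p+ζ)`. -/
theorem negType_interval_of_gap_pos {X : Type*} [MetricSpace X] [Fintype X]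
    (hcard : 3 ≤ Fintype.card X) (p : ℝ) (hp : 0 ≤ p)
    (hD : 1 < scaledDiam X)
    (hΓ : 0 < negTypeGap X p)
    (ζ : ℝ)
    (hζ : ζ = Real.log (1 + negTypeGap X p /
        (Metric.diam (Set.univ : Set X) ^ p * gammaFn (Fintype.card X))) /
      Real.log (scaledDiam X)) :
    (∀ q : ℝ, p ≤ q → q ≤ p + ζ → HasNegType X q) ∧
    (∀ q : ℝ, p ≤ q → q < p + ζ → HasStrictNegType X q) := by
  have hpair : ∃ x y : X, x ≠ y := by
    obtain ⟨x, y, h⟩ := Fintype.exists_pair_of_one_lt_card (α := X) (by omega)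
    exact ⟨x, y, h⟩
  set δ := minSep X with hδdef
  set Δ := Metric.diam (Set.univ : Set X) with hΔdef
  have hδ : 0 < δ := minSep_pos' hpair
  have hDeq : scaledDiam X = Δ / δ := rfl
  have hδΔ : δ < Δ := by
    rw [hDeq, lt_div_iff₀ hδ, one_mul] at hD
    exact hD
  have hΔ : 0 < Δ := lt_trans hδ hδΔ
  have hγb := gammaFn_bounds' hcard
  have hγpos : 0 < gammaFn (Fintype.card X) := by linarith [hγb.1]
  have hΔp : 0 < Δ ^ p := Real.rpow_pos_of_pos hΔ p
  have hden : 0 < Δ ^ p * gammaFn (Fintype.card X) := mul_pos hΔp hγpos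
  set c : ℝ := negTypeGap X p / (Δ ^ p * gammaFn (Fintype.card X)) with hc
  have hcpos : 0 < c := div_pos hΓ hden
  have hcΓ : c * (Δ ^ p * gammaFn (Fintype.card X)) = negTypeGap X p :=
    div_mul_cancel₀ _ hden.ne'
  have hlog : 0 < Real.log (scaledDiam X) := Real.log_pos hD
  have hζlog : ζ * Real.log (scaledDiam X) = Real.log (1 + c) := by
    rw [hζ, div_mul_cancel₀ _ hlog.ne']
  have hDpos : 0 < scaledDiam X := by linarith
  -- gap positivity transfer
  have key : ∀ ε : ℝ, 0 ≤ ε → (scaledDiam X) ^ ε ≤ 1 + c →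
      ∀ (s t : ℕ) (a : Fin s → X) (b : Fin t → X) (m : Fin s → ℝ) (n : Fin t → ℝ),
        IsNormSimplex a b m n → 0 ≤ simplexGap (p + ε) a b m n := by
    intro ε hε hDε s t a b m n hS
    have hlow := gap_lower_main' hcard hp hε hS
    have hδε : 0 < δ ^ ε := Real.rpow_pos_of_pos hδ ε
    have hdiv : Δ ^ ε / δ ^ ε ≤ 1 + c := by
      rw [← Real.div_rpow hΔ.le hδ.le]
      exact hDε
    have h7 : Δ ^ ε - δ ^ ε ≤ c * δ ^ ε := by
      rw [div_le_iff₀ hδε] at hdiv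
      nlinarith
    have h8 : (Δ ^ ε - δ ^ ε) * (Δ ^ p * gammaFn (Fintype.card X))
        ≤ (c * δ ^ ε) * (Δ ^ p * gammaFn (Fintype.card X)) :=
      mul_le_mul_of_nonneg_right h7 hden.le
    have h9 : (c * δ ^ ε) * (Δ ^ p * gammaFn (Fintype.card X))
        = δ ^ ε * negTypeGap X p := by
      linear_combination δ ^ ε * hcΓ
    linarith
  have keyStrict : ∀ ε : ℝ, 0 ≤ ε → (scaledDiam X) ^ ε < 1 + c →
      ∀ (s t : ℕ) (a : Fin s → X) (b : Fin t → X) (m : Fin s → ℝ) (n : Fin t → ℝ),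
        IsNormSimplex a b m n → 0 < simplexGap (p + ε) a b m n := by
    intro ε hε hDε s t a b m n hS
    have hlow := gap_lower_main' hcard hp hε hS
    have hδε : 0 < δ ^ ε := Real.rpow_pos_of_pos hδ ε
    have hdiv : Δ ^ ε / δ ^ ε < 1 + c := by
      rw [← Real.div_rpow hΔ.le hδ.le]
      exact hDε
    have h7 : Δ ^ ε - δ ^ ε < c * δ ^ ε := by
      rw [div_lt_iff₀ hδε] at hdiv
      nlinarith
    have h8 : (Δ ^ ε - δ ^ ε) * (Δ ^ p * gammaFn (Fintype.card X))
        < (c * δ ^ ε) * (Δ ^ p * gammaFn (Fintype.card X)) :=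
      mul_lt_mul_of_pos_right h7 hden
    have h9 : (c * δ ^ ε) * (Δ ^ p * gammaFn (Fintype.card X))
        = δ ^ ε * negTypeGap X p := by
      linear_combination δ ^ ε * hcΓ
    linarith
  have expBound : ∀ ε : ℝ, ε * Real.log (scaledDiam X) ≤ Real.log (1 + c) →
      (scaledDiam X) ^ ε ≤ 1 + c := by
    intro ε h1
    rw [Real.rpow_def_of_pos hDpos]
    calc Real.exp (Real.log (scaledDiam X) * ε) ≤ Real.exp (Real.log (1 + c)) := by
          apply Real.exp_le_exp.mpr; rw [mul_comm]; exact h1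
      _ = 1 + c := Real.exp_log (by linarith)
  have expBoundStrict : ∀ ε : ℝ, ε * Real.log (scaledDiam X) < Real.log (1 + c) →
      (scaledDiam X) ^ ε < 1 + c := by
    intro ε h1
    rw [Real.rpow_def_of_pos hDpos]
    calc Real.exp (Real.log (scaledDiam X) * ε) < Real.exp (Real.log (1 + c)) := by
          apply Real.exp_lt_exp.mpr; rw [mul_comm]; exact h1
      _ = 1 + c := Real.exp_log (by linarith)
  have glue : ∀ q : ℝ, (∀ (s t : ℕ) (a : Fin s → X) (b : Fin t → X)
      (m : Fin s → ℝ) (n : Fin t → ℝ),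
        IsNormSimplex a b m n → 0 ≤ simplexGap q a b m n) → HasNegType X q := by
    intro q hgap k hk x hx η hsum
    by_cases hη : η = 0
    · subst hη; simp
    · obtain ⟨s, t, a, b, m, n, α, hS, hα, hQ⟩ := quad_eq_gap' x hx η hsum hη
      rw [hQ q]
      have hg := hgap s t a b m n hS
      nlinarith [hg, sq_nonneg α]
  have glueStrict : ∀ q : ℝ, (∀ (s t : ℕ) (a : Fin s → X) (b : Fin t → X)
      (m : Fin s → ℝ) (n : Fin t → ℝ),
        IsNormSimplex a b m n → 0 < simplexGap q a b m n) →
      ∀ (k : ℕ), 2 ≤ k → ∀ (x : Fin k → X), Function.Injective x →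
        ∀ (η : Fin k → ℝ), (∑ i, η i) = 0 → η ≠ 0 →
          (∑ i, ∑ j, negKer q (x i) (x j) * η i * η j) < 0 := by
    intro q hgap k hk x hx η hsum hη
    obtain ⟨s, t, a, b, m, n, α, hS, hα, hQ⟩ := quad_eq_gap' x hx η hsum hη
    rw [hQ q]
    have hg := hgap s t a b m n hS
    nlinarith [hg, sq_nonneg α, mul_pos hα hα]
  constructor
  · intro q hq1 hq2
    have hε : 0 ≤ q - p := by linarith
    have h1 : (q - p) * Real.log (scaledDiam X) ≤ Real.log (1 + c) := by
      rw [← hζlog]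
      exact mul_le_mul_of_nonneg_right (by linarith) hlog.le
    have hDε := expBound (q - p) h1
    apply glue q
    intro s t a b m n hS
    have hres := key (q - p) hε hDε s t a b m n hS
    rwa [show p + (q - p) = q by ring] at hres
  · intro q hq1 hq2
    have hε : 0 ≤ q - p := by linarith
    have h1 : (q - p) * Real.log (scaledDiam X) < Real.log (1 + c) := by
      rw [← hζlog]
      exact mul_lt_mul_of_pos_right (by linarith) hlog
    have hDε := expBoundStrict (q - p) h1
    have hgap : ∀ (s t : ℕ) (a : Fin s → X) (b : Fin t → X)
        (m : Fin s → ℝ) (n : Fin t → ℝ),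
          IsNormSimplex a b m n → 0 < simplexGap q a b m n := by
      intro s t a b m n hS
      have hres := keyStrict (q - p) hε hDε s t a b m n hS
      rwa [show p + (q - p) = q by ring] at hres
    constructor
    · exact glue q (fun s t a b m n hS => (hgap s t a b m n hS).le)
    · exact glueStrict q hgap
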